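/- If L is a linear subspace of M_n(ℂ) all of whose elements are singular (non-invertible) matrices, then L is not transitive. Equivalently, every transitive subspace of M_n(ℂ) contains an invertible matrix. -/

import Mathlib

open Matrix Polynomial Module

/-- A subspace of `M_n(ℂ)` consisting entirely of singular matrices is not
transitive; equivalently, every transitive subspace contains an invertible. -/
theorem singular_subspace_not_transitive (n : ℕ)
    (L : Submodule ℂ (Matrix (Fin n) (Fin n) ℂ))
    (hsing : ∀ A ∈ L, A.det = 0) :
    ¬ (∀ x : Fin n → ℂ, x ≠ 0 → ∀ y : Fin n → ℂ, ∃ A ∈ L, A.mulVec x = y) := by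
  classical
  intro h
  -- pick a maximal-rank element of L
  set T : Set ℕ := Matrix.rank '' (L : Set (Matrix (Fin n) (Fin n) ℂ)) with hT
  have hTne : T.Nonempty := ⟨_, ⟨0, L.zero_mem, rfl⟩⟩
  have hTbdd : BddAbove T := by
    refine ⟨n, ?_⟩
    rintro _ ⟨A, hA, rfl⟩
    simpa using A.rank_le_card_width
  obtain ⟨A, hAL, hAr⟩ := Nat.sSup_mem hTne hTbdd
  set r := sSup T with hr
  have hmax : ∀ B ∈ L, B.rank ≤ r := fun B hB => le_csSup hTbdd ⟨B, hB, rfl⟩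
  have hdetA : A.det = 0 := hsing A hAL
  -- a nonzero kernel vector x
  obtain ⟨x, hx0, hAx⟩ := Matrix.exists_mulVec_eq_zero_iff.2 hdetA
  -- a vector y not in the range of A
  have hAnu : ¬ IsUnit A := by
    rw [Matrix.isUnit_iff_isUnit_det, isUnit_iff_ne_zero]
    simp [hdetA]
  have hnsurj : ¬ Function.Surjective A.mulVec := fun hs =>
    hAnu (Matrix.mulVec_surjective_iff_isUnit.1 hs)
  rw [Function.Surjective] at hnsurj
  push_neg at hnsurj
  obtain ⟨y, hy⟩ := hnsurj
  have hyR : y ∉ LinearMap.range A.mulVecLin := by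
    rintro ⟨v, rfl⟩
    exact hy v rfl
  -- transitivity gives B with B x = y
  obtain ⟨B, hBL, hBx⟩ := h x hx0 y
  -- a basis of the range of A
  have hrk : finrank ℂ (LinearMap.range A.mulVecLin) = r := hAr
  let b : Basis (Fin r) ℂ (LinearMap.range A.mulVecLin) := finBasisOfFinrankEq ℂ _ hrk
  -- preimages of the basis vectors
  have hvex : ∀ i : Fin r, ∃ v, A.mulVec v = (b i : Fin n → ℂ) := fun i => (b i).2
  choose v hv using hvex
  -- the independent family u = (b 0, ..., b (r-1), y)
  set u : Fin (r + 1) → (Fin n → ℂ) :=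
    Fin.snoc (fun i => (b i : Fin n → ℂ)) y with hu
  have hbi : LinearIndependent ℂ (fun i => (b i : Fin n → ℂ)) :=
    b.linearIndependent.map' (LinearMap.range A.mulVecLin).subtype
      (Submodule.ker_subtype _)
  have hspan : Submodule.span ℂ (Set.range fun i => (b i : Fin n → ℂ))
      ≤ LinearMap.range A.mulVecLin := by
    rw [Submodule.span_le]
    rintro _ ⟨i, rfl⟩
    exact (b i).2
  have huind : LinearIndependent ℂ u := by
    rw [hu, linearIndependent_fin_snoc]
    exact ⟨hbi, fun hmem => hyR (hspan hmem)⟩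
  -- a left inverse P sending u j to the j-th standard basis vector
  set G : (Fin (r + 1) → ℂ) →ₗ[ℂ] (Fin n → ℂ) := Fintype.linearCombination ℂ u with hG
  have hGker : LinearMap.ker G = ⊥ := by
    rw [LinearMap.ker_eq_bot']
    intro c hc
    have := Fintype.linearIndependent_iff.1 huind c (by simpa [hG, Fintype.linearCombination_apply] using hc)
    funext i; exact this i
  obtain ⟨P, hP⟩ := G.exists_leftInverse_of_injective hGker
  have hPu : ∀ j, P (u j) = Pi.single j (1 : ℂ) := by
    intro j
    have h1 : G (Pi.single j (1 : ℂ)) = u j := by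
      simp [hG]
    have := LinearMap.congr_fun hP (Pi.single j (1 : ℂ))
    rwa [LinearMap.comp_apply, h1, LinearMap.id_apply] at this
  -- the family w and the matrix F
  set w : Fin (r + 1) → (Fin n → ℂ) := Fin.snoc v x with hw
  set F : Matrix (Fin (r + 1)) (Fin (r + 1)) ℂ :=
    Matrix.of fun i j => if j = Fin.last r then 0 else P (B.mulVec (w j)) i with hF
  -- a nonzero polynomial whose value at t is det (1 + t • F)
  set q : ℂ[X] := Matrix.det (1 + (X : ℂ[X]) • F.map C) with hq
  have hq_eval : ∀ t : ℂ, q.eval t = Matrix.det (1 + t • F) := by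
    intro t
    rw [hq, ← coe_evalRingHom, RingHom.map_det]
    congr 1
    ext i j
    simp only [RingHom.mapMatrix_apply, Polynomial.coe_evalRingHom, Matrix.add_apply, Matrix.smul_apply, Matrix.map_apply, Matrix.one_apply,
      smul_eq_mul, Polynomial.eval_add, Polynomial.eval_mul, Polynomial.eval_X,
      Polynomial.eval_C, apply_ite (Polynomial.eval t), Polynomial.eval_one,
      Polynomial.eval_zero]
  have hq0 : q ≠ 0 := by
    intro hq0
    have := hq_eval 0
    rw [hq0] at this
    simp at this
  -- choose t ≠ 0 which is not a root
  have hfin : ({0} ∪ {z | q.IsRoot z} : Set ℂ).Finite :=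
    (Set.finite_singleton 0).union (q.finite_setOf_isRoot hq0)
  obtain ⟨t, ht⟩ := hfin.infinite_compl.nonempty
  simp only [Set.mem_compl_iff, Set.mem_union, Set.mem_singleton_iff, Set.mem_setOf_eq,
    not_or] at ht
  obtain ⟨ht0, htroot⟩ := ht
  have hdetN : Matrix.det (1 + t • F) ≠ 0 := by
    rw [← hq_eval]; exact htroot
  -- the matrix N = 1 + t • F has independent columns
  set N : Matrix (Fin (r + 1)) (Fin (r + 1)) ℂ := 1 + t • F with hN
  have hNu : IsUnit N := by
    rw [Matrix.isUnit_iff_isUnit_det, isUnit_iff_ne_zero]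
    exact hdetN
  have hNcols : LinearIndependent ℂ (fun j => Nᵀ j) :=
    Matrix.linearIndependent_cols_iff_isUnit.2 hNu
  -- scale the last column by t
  set κ : Fin (r + 1) → ℂˣ := fun j => if j = Fin.last r then Units.mk0 t ht0 else 1 with hκ
  have hscaled : LinearIndependent ℂ (fun j => (κ j : ℂ) • Nᵀ j) :=
    hNcols.units_smul κ
  -- the matrix M = A + t • B
  set M : Matrix (Fin n) (Fin n) ℂ := A + t • B with hM
  have hML : M ∈ L := L.add_mem hAL (L.smul_mem t hBL)
  -- the key computation: P ∘ (M.mulVec ∘ w) equals the scaled columns of N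
  have hkey : ∀ j, P (M.mulVec (w j)) = (κ j : ℂ) • Nᵀ j := by
    intro j
    have hMw : M.mulVec (w j) = A.mulVec (w j) + t • B.mulVec (w j) := by
      rw [hM, Matrix.add_mulVec, Matrix.smul_mulVec]
    by_cases hj : j = Fin.last r
    · subst hj
      have hwl : w (Fin.last r) = x := by rw [hw]; simp [Fin.snoc_last]
      rw [hMw, hwl, hAx, hBx, map_add, map_zero, zero_add, _root_.map_smul]
      have hPy : P y = Pi.single (Fin.last r) (1 : ℂ) := by
        have := hPu (Fin.last r)
        rwa [hu, Fin.snoc_last] at this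
      rw [hPy]
      funext i
      simp [hκ, hN, hF, Matrix.transpose_apply, Matrix.one_apply, Pi.single_apply, eq_comm]
    · -- j is not the last index
      obtain ⟨i', rfl⟩ : ∃ i' : Fin r, Fin.castSucc i' = j :=
        ⟨j.castPred hj, Fin.castSucc_castPred j hj⟩
      have hwj : w (Fin.castSucc i') = v i' := by rw [hw]; simp [Fin.snoc_castSucc]
      have hAv : A.mulVec (v i') = u (Fin.castSucc i') := by
        rw [hu, Fin.snoc_castSucc, hv]
      rw [hMw, hwj, map_add, _root_.map_smul, hAv, hPu]
      funext i
      have hne : Fin.castSucc i' ≠ Fin.last r := Fin.castSucc_lt_last i' |>.ne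
      simp [hκ, hN, hF, hne, Matrix.transpose_apply, Matrix.one_apply, Pi.single_apply,
        hwj, eq_comm]
  -- so the images M.mulVec (w j) are independent
  have hgind : LinearIndependent ℂ (fun j => M.mulVec (w j)) := by
    refine LinearIndependent.of_comp P ?_
    have : (P ∘ fun j => M.mulVec (w j)) = fun j => (κ j : ℂ) • Nᵀ j := by
      funext j; exact hkey j
    rw [this]
    exact hscaled
  -- hence rank M ≥ r + 1, contradicting maximality
  have hle : r + 1 ≤ M.rank := by
    have h1 : Submodule.span ℂ (Set.range fun j => M.mulVec (w j))
        ≤ LinearMap.range M.mulVecLin := by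
      rw [Submodule.span_le]
      rintro _ ⟨j, rfl⟩
      exact ⟨w j, rfl⟩
    calc r + 1 = finrank ℂ (Submodule.span ℂ (Set.range fun j => M.mulVec (w j))) := by
          rw [finrank_span_eq_card hgind, Fintype.card_fin]
      _ ≤ finrank ℂ (LinearMap.range M.mulVecLin) := Submodule.finrank_mono h1
      _ = M.rank := rfl
  have := hmax M hML
  omega
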